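/- For the scalar trinion cost J(w) = |d - w x|^2 viewed as a real function of the three real components (w_a, w_b, w_c) of w (with fixed trinions d and x), the conjugate trinion gradient satisfies ∇_{w*} J = (1/3)(∂J/∂w_a + i ∂J/∂w_b + j ∂J/∂w_c) = -(2/3) e x*, where e = d - w x. -/

import Mathlib

@[ext]
structure Trinion where
  a : ℝ
  b : ℝ
  c : ℝ

namespace Trinion

instance : Zero Trinion := ⟨⟨0, 0, 0⟩⟩
instance : One Trinion := ⟨⟨1, 0, 0⟩⟩
instance : Add Trinion := ⟨fun v w => ⟨v.a + w.a, v.b + w.b, v.c + w.c⟩⟩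
instance : Neg Trinion := ⟨fun v => ⟨-v.a, -v.b, -v.c⟩⟩
instance : Mul Trinion := ⟨fun v w =>
  ⟨v.a * w.a - v.b * w.c - v.c * w.b,
   v.a * w.b + v.b * w.a - v.c * w.c,
   v.a * w.c + v.c * w.a + v.b * w.b⟩⟩

@[simp] lemma zero_a : (0 : Trinion).a = 0 := rfl
@[simp] lemma zero_b : (0 : Trinion).b = 0 := rfl
@[simp] lemma zero_c : (0 : Trinion).c = 0 := rfl
@[simp] lemma one_a : (1 : Trinion).a = 1 := rfl
@[simp] lemma one_b : (1 : Trinion).b = 0 := rfl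
@[simp] lemma one_c : (1 : Trinion).c = 0 := rfl
@[simp] lemma add_a (v w : Trinion) : (v + w).a = v.a + w.a := rfl
@[simp] lemma add_b (v w : Trinion) : (v + w).b = v.b + w.b := rfl
@[simp] lemma add_c (v w : Trinion) : (v + w).c = v.c + w.c := rfl
@[simp] lemma neg_a (v : Trinion) : (-v).a = -v.a := rfl
@[simp] lemma neg_b (v : Trinion) : (-v).b = -v.b := rfl
@[simp] lemma neg_c (v : Trinion) : (-v).c = -v.c := rfl
@[simp] lemma mul_a (v w : Trinion) :
    (v * w).a = v.a * w.a - v.b * w.c - v.c * w.b := rfl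
@[simp] lemma mul_b (v w : Trinion) :
    (v * w).b = v.a * w.b + v.b * w.a - v.c * w.c := rfl
@[simp] lemma mul_c (v w : Trinion) :
    (v * w).c = v.a * w.c + v.c * w.a + v.b * w.b := rfl

instance : CommRing Trinion where
  add_assoc u v w := by ext <;> simp <;> ring
  zero_add v := by ext <;> simp
  add_zero v := by ext <;> simp
  add_comm u v := by ext <;> simp <;> ring
  neg_add_cancel v := by ext <;> simp
  left_distrib u v w := by ext <;> simp <;> ring
  right_distrib u v w := by ext <;> simp <;> ring
  zero_mul v := by ext <;> simp
  mul_zero v := by ext <;> simp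
  mul_assoc u v w := by ext <;> simp <;> ring
  one_mul v := by ext <;> simp
  mul_one v := by ext <;> simp
  mul_comm u v := by ext <;> simp <;> ring
  nsmul := nsmulRec
  zsmul := zsmulRec

def algMap : ℝ →+* Trinion where
  toFun r := ⟨r, 0, 0⟩
  map_one' := rfl
  map_mul' r s := by ext <;> simp
  map_zero' := rfl
  map_add' r s := by ext <;> simp

instance : Algebra ℝ Trinion := algMap.toAlgebra

/-- The imaginary unit `i`. -/
def I : Trinion := ⟨0, 1, 0⟩

/-- The imaginary unit `j`. -/
def J : Trinion := ⟨0, 0, 1⟩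

/-- Trinion conjugation: `(a + i b + j c)* = a - j b - i c`. -/
def conj (v : Trinion) : Trinion := ⟨v.a, -v.c, -v.b⟩

/-- The real part. -/
def re (v : Trinion) : ℝ := v.a

/-- The modulus. -/
noncomputable def tmod (v : Trinion) : ℝ := Real.sqrt (v.a ^ 2 + v.b ^ 2 + v.c ^ 2)

end Trinion
lemma Trinion.smul_a (r : ℝ) (v : Trinion) : (r • v).a = r * v.a := by
  show (Trinion.algMap r * v).a = _
  simp [Trinion.algMap]

lemma Trinion.smul_b (r : ℝ) (v : Trinion) : (r • v).b = r * v.b := by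
  show (Trinion.algMap r * v).b = _
  simp [Trinion.algMap]

lemma Trinion.smul_c (r : ℝ) (v : Trinion) : (r • v).c = r * v.c := by
  show (Trinion.algMap r * v).c = _
  simp [Trinion.algMap]

lemma deriv_quad (c1 c2 c3 k1 k2 k3 t : ℝ) :
    deriv (fun s : ℝ => (c1 - s * k1) ^ 2 + (c2 - s * k2) ^ 2 + (c3 - s * k3) ^ 2) t
      = -2 * (c1 - t * k1) * k1 - 2 * (c2 - t * k2) * k2 - 2 * (c3 - t * k3) * k3 := by
  have h1 : HasDerivAt (fun s : ℝ => (c1 - s * k1) ^ 2)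
      (-(2 * (c1 - t * k1) * k1)) t := by
    simpa using (((hasDerivAt_id t).mul_const k1).const_sub c1).fun_pow 2
  have h2 : HasDerivAt (fun s : ℝ => (c2 - s * k2) ^ 2)
      (-(2 * (c2 - t * k2) * k2)) t := by
    simpa using (((hasDerivAt_id t).mul_const k2).const_sub c2).fun_pow 2
  have h3 : HasDerivAt (fun s : ℝ => (c3 - s * k3) ^ 2)
      (-(2 * (c3 - t * k3) * k3)) t := by
    simpa using (((hasDerivAt_id t).mul_const k3).const_sub c3).fun_pow 2
  have := ((h1.fun_add h2).fun_add h3).deriv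
  rw [this]; ring

/-- For `J(w) = |d - w x|^2`, the conjugate trinion gradient satisfies
`(1/3)(∂J/∂w_a + i ∂J/∂w_b + j ∂J/∂w_c) = -(2/3) e x*` where `e = d - w x`. -/
theorem trinion_lms_gradient (d x w : Trinion) :
    let Jf : Trinion → ℝ := fun u =>
      (d - u * x).a ^ 2 + (d - u * x).b ^ 2 + (d - u * x).c ^ 2
    (((1 : ℝ) / 3) •
      (⟨deriv (fun t : ℝ => Jf ⟨t, w.b, w.c⟩) w.a,
        deriv (fun t : ℝ => Jf ⟨w.a, t, w.c⟩) w.b,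
        deriv (fun t : ℝ => Jf ⟨w.a, w.b, t⟩) w.c⟩ : Trinion))
      = (-(2 : ℝ) / 3) • ((d - w * x) * Trinion.conj x) := by
  intro Jf
  have ea : (fun t : ℝ => Jf ⟨t, w.b, w.c⟩)
      = fun s : ℝ => ((d.a + w.b * x.c + w.c * x.b) - s * x.a) ^ 2
        + ((d.b - w.b * x.a + w.c * x.c) - s * x.b) ^ 2
        + ((d.c - w.c * x.a - w.b * x.b) - s * x.c) ^ 2 := by
    funext s; simp only [Jf, sub_eq_add_neg, Trinion.add_a, Trinion.add_b, Trinion.add_c, Trinion.neg_a, Trinion.neg_b, Trinion.neg_c, Trinion.mul_a, Trinion.mul_b, Trinion.mul_c]; ring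
  have eb : (fun t : ℝ => Jf ⟨w.a, t, w.c⟩)
      = fun s : ℝ => ((d.a - w.a * x.a + w.c * x.b) - s * (-x.c)) ^ 2
        + ((d.b - w.a * x.b + w.c * x.c) - s * x.a) ^ 2
        + ((d.c - w.a * x.c - w.c * x.a) - s * x.b) ^ 2 := by
    funext s; simp only [Jf, sub_eq_add_neg, Trinion.add_a, Trinion.add_b, Trinion.add_c, Trinion.neg_a, Trinion.neg_b, Trinion.neg_c, Trinion.mul_a, Trinion.mul_b, Trinion.mul_c]; ring
  have ec : (fun t : ℝ => Jf ⟨w.a, w.b, t⟩)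
      = fun s : ℝ => ((d.a - w.a * x.a + w.b * x.c) - s * (-x.b)) ^ 2
        + ((d.b - w.a * x.b - w.b * x.a) - s * (-x.c)) ^ 2
        + ((d.c - w.a * x.c - w.b * x.b) - s * x.a) ^ 2 := by
    funext s; simp only [Jf, sub_eq_add_neg, Trinion.add_a, Trinion.add_b, Trinion.add_c, Trinion.neg_a, Trinion.neg_b, Trinion.neg_c, Trinion.mul_a, Trinion.mul_b, Trinion.mul_c]; ring
  rw [ea, eb, ec, deriv_quad, deriv_quad, deriv_quad]
  ext <;>
    simp only [Trinion.smul_a, Trinion.smul_b, Trinion.smul_c, Trinion.conj, sub_eq_add_neg,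
      Trinion.add_a, Trinion.add_b, Trinion.add_c, Trinion.neg_a, Trinion.neg_b, Trinion.neg_c,
      Trinion.mul_a, Trinion.mul_b, Trinion.mul_c] <;> ring
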